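/- (Lemma 1) For every h ∈ K with h ≠ 0, the map σ_h : V* → V* given by σ_h(c) = (Ψ_m(h))ᵀ *ᵥ c is a well-defined bijection of V*, and Φ_E(h·X)(c) = Φ_E(X)(σ_h(c)) for all X ∈ K and all c ∈ V*. Equivalently, the matrix Ψ_M(h) satisfying Ψ_M(h) *ᵥ Φ_E(X) = Φ_E(h·X) for all X is a permutation matrix. -/
import Mathlib


open Matrix

/-- **Lemma 1.** For every `h ≠ 0` the map `σ_h : V* → V*`,
`σ_h c = (Ψ_m h)ᵀ *ᵥ c`, is a well-defined bijection of `V*`, and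
`Φ_E (h * X) c = Φ_E X (σ_h c)` for all `X` and `c`; i.e. the matrix `Ψ_M h` with
`Ψ_M h *ᵥ Φ_E X = Φ_E (h * X)` is a permutation matrix. -/
theorem extended_binary_multiplication_is_permutation (b : ℕ) (hb : 1 ≤ b)
    (ΦB : GaloisField 2 b ≃ₗ[ZMod 2] (Fin b → ZMod 2))
    (Ψm : GaloisField 2 b → Matrix (Fin b) (Fin b) (ZMod 2))
    (hΨm : ∀ (h x : GaloisField 2 b), Ψm h *ᵥ ΦB x = ΦB (h * x))
    (ΦE : GaloisField 2 b → ({v : Fin b → ZMod 2 // v ≠ 0} → ZMod 2))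
    (hΦE : ∀ (X : GaloisField 2 b) (c : {v : Fin b → ZMod 2 // v ≠ 0}),
      ΦE X c = ∑ e : Fin b, (c : Fin b → ZMod 2) e * ΦB X e)
    (h : GaloisField 2 b) (hh : h ≠ 0) :
    ∃ σ : {v : Fin b → ZMod 2 // v ≠ 0} → {v : Fin b → ZMod 2 // v ≠ 0},
      Function.Bijective σ ∧
      (∀ c : {v : Fin b → ZMod 2 // v ≠ 0},
        (σ c : Fin b → ZMod 2) = (Ψm h)ᵀ *ᵥ (c : Fin b → ZMod 2)) ∧
      (∀ (X : GaloisField 2 b) (c : {v : Fin b → ZMod 2 // v ≠ 0}),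
        ΦE (h * X) c = ΦE X (σ c)) := by
  set M := Ψm h with hM
  set N := Ψm h⁻¹ with hN
  -- mulVec identities
  have key : ∀ (g g' : GaloisField 2 b) (v : Fin b → ZMod 2),
      Ψm g *ᵥ (Ψm g' *ᵥ v) = Ψm (g * g') *ᵥ v := by
    intro g g' v
    have hv : v = ΦB (ΦB.symm v) := (ΦB.apply_symm_apply v).symm
    rw [hv, hΨm, hΨm, hΨm, mul_assoc]
  have idvec : ∀ v : Fin b → ZMod 2, Ψm 1 *ᵥ v = v := by
    intro v
    have hv : v = ΦB (ΦB.symm v) := (ΦB.apply_symm_apply v).symm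
    rw [hv, hΨm, one_mul]
  have hMN : M * N = 1 := by
    apply Matrix.toLin'.injective
    apply LinearMap.ext
    intro v
    simp only [Matrix.toLin'_apply, Matrix.toLin'_one]
    show (M * N) *ᵥ v = LinearMap.id v
    rw [← Matrix.mulVec_mulVec, key, mul_inv_cancel₀ hh, idvec]; rfl
  have hNM : N * M = 1 := by
    apply Matrix.toLin'.injective
    apply LinearMap.ext
    intro v
    simp only [Matrix.toLin'_apply, Matrix.toLin'_one]
    show (N * M) *ᵥ v = LinearMap.id v
    rw [← Matrix.mulVec_mulVec, key, inv_mul_cancel₀ hh, idvec]; rfl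
  have hMtNt : Mᵀ * Nᵀ = 1 := by rw [← Matrix.transpose_mul, hNM, Matrix.transpose_one]
  have hNtMt : Nᵀ * Mᵀ = 1 := by rw [← Matrix.transpose_mul, hMN, Matrix.transpose_one]
  have hne : ∀ (A B : Matrix (Fin b) (Fin b) (ZMod 2)), A * B = 1 →
      ∀ v : Fin b → ZMod 2, v ≠ 0 → B *ᵥ v ≠ 0 := by
    intro A B hAB v hv hc
    apply hv
    have : A *ᵥ (B *ᵥ v) = v := by rw [Matrix.mulVec_mulVec, hAB, Matrix.one_mulVec]
    rw [hc, Matrix.mulVec_zero] at this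
    exact this.symm
  refine ⟨fun c => ⟨Mᵀ *ᵥ (c : Fin b → ZMod 2), hne Nᵀ Mᵀ hNtMt _ c.2⟩, ?_, fun c => rfl, ?_⟩
  · constructor
    · intro c d hcd
      have h1 : Mᵀ *ᵥ (c : Fin b → ZMod 2) = Mᵀ *ᵥ (d : Fin b → ZMod 2) :=
        congrArg Subtype.val hcd
      have h2 : Nᵀ *ᵥ (Mᵀ *ᵥ (c : Fin b → ZMod 2)) = Nᵀ *ᵥ (Mᵀ *ᵥ (d : Fin b → ZMod 2)) := by
        rw [h1]
      rw [Matrix.mulVec_mulVec, Matrix.mulVec_mulVec, hNtMt, Matrix.one_mulVec,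
        Matrix.one_mulVec] at h2
      exact Subtype.ext h2
    · intro c
      refine ⟨⟨Nᵀ *ᵥ (c : Fin b → ZMod 2), hne Mᵀ Nᵀ hMtNt _ c.2⟩, Subtype.ext ?_⟩
      show Mᵀ *ᵥ (Nᵀ *ᵥ (c : Fin b → ZMod 2)) = _
      rw [Matrix.mulVec_mulVec, hMtNt, Matrix.one_mulVec]
  · intro X c
    rw [hΦE, hΦE]
    have lhs : ∑ e : Fin b, (c : Fin b → ZMod 2) e * ΦB (h * X) e
        = (c : Fin b → ZMod 2) ⬝ᵥ (M *ᵥ ΦB X) := by rw [hΨm]; rfl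
    have rhs : ∑ e : Fin b, (Mᵀ *ᵥ (c : Fin b → ZMod 2)) e * ΦB X e
        = (Mᵀ *ᵥ (c : Fin b → ZMod 2)) ⬝ᵥ ΦB X := rfl
    rw [lhs]
    show _ = (Mᵀ *ᵥ (c : Fin b → ZMod 2)) ⬝ᵥ ΦB X
    rw [Matrix.mulVec_transpose, ← Matrix.dotProduct_mulVec]
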